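/- Let n, m ≥ 1, let Ω ⊆ [n]×[m] be an observation pattern, and let (i,j) ∈ [n]×[m] be such that u_i and v_j lie in different connected components of the bipartite graph G(Ω). Then there exist additive matrices M*, M'* ∈ ℝ^{n×m} such that M*_{kℓ} = M'*_{kℓ} for every (k,ℓ) ∈ Ω but M*_{ij} ≠ M'*_{ij}. -/

import Mathlib

/-!
STATEMENT 0: If `u_i` and `v_j` lie in different connected components of the
bipartite observation graph `G(Ω)`, then there exist two additive matrices agreeing
on all observed entries but differing at entry `(i,j)`.
-/

/-- The bipartite observation graph `G(Ω)`: row vertices `Sum.inl k` and column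
vertices `Sum.inr ℓ`, with an edge iff `(k,ℓ) ∈ Ω`. -/
def bipGraph {n m : ℕ} (Ω : Finset (Fin n × Fin m)) : SimpleGraph (Fin n ⊕ Fin m) where
  Adj x y :=
    match x, y with
    | Sum.inl k, Sum.inr l => (k, l) ∈ Ω
    | Sum.inr l, Sum.inl k => (k, l) ∈ Ω
    | _, _ => False
  symm := by
    constructor
    rintro (k | k) (l | l) h
    · exact h.elim
    · exact h
    · exact h
    · exact h.elim
  loopless := by constructor; rintro (k | k) h <;> exact h

theorem stmt0 {n m : ℕ} (hn : 1 ≤ n) (hm : 1 ≤ m) (Ω : Finset (Fin n × Fin m))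
    (i : Fin n) (j : Fin m)
    (hdisc : ¬ (bipGraph Ω).Reachable (Sum.inl i) (Sum.inr j)) :
    ∃ (a : Fin n → ℝ) (b : Fin m → ℝ) (a' : Fin n → ℝ) (b' : Fin m → ℝ),
      (∀ p ∈ Ω, a p.1 + b p.2 = a' p.1 + b' p.2) ∧ a i + b j ≠ a' i + b' j := by
  classical
  refine ⟨0, 0, fun k => if (bipGraph Ω).Reachable (Sum.inl i) (Sum.inl k) then 1 else 0,
    fun l => if (bipGraph Ω).Reachable (Sum.inl i) (Sum.inr l) then -1 else 0, ?_, ?_⟩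
  · rintro ⟨k, l⟩ hp
    have hadj : (bipGraph Ω).Adj (Sum.inl k) (Sum.inr l) := hp
    have hiff : (bipGraph Ω).Reachable (Sum.inl i) (Sum.inl k) ↔
        (bipGraph Ω).Reachable (Sum.inl i) (Sum.inr l) :=
      ⟨fun h => h.trans hadj.reachable, fun h => h.trans hadj.symm.reachable⟩
    by_cases h : (bipGraph Ω).Reachable (Sum.inl i) (Sum.inl k)
    · simp [h, hiff.mp h]
    · simp only []; rw [if_neg h, if_neg (fun h' => h (hiff.mpr h'))]; simp
  · have hi : (bipGraph Ω).Reachable (Sum.inl i) (Sum.inl i) := SimpleGraph.Reachable.refl _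
    simp [hi, hdisc]
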